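/- arXiv:1903.02712 — 7 statements merged into one kernel-verified Lean document; each statement's English description precedes it below -/
import Mathlib

section
/- Under these hypotheses, f is even, f ≥ 12, v = 2 + 3f/2, the sum Σ_{k≥3} (k−3)·v_k equals f/2 − 6, and the number of degree-3 vertices satisfies v₃ ≥ f + 8. -/
/-- Combinatorics of an edge-to-edge tiling of the sphere by `f` pentagons:
`f` is even, `f ≥ 12`, `v = 2 + 3f/2`, `Σ (k-3)·v_k = f/2 - 6`, and `v₃ ≥ f + 8`. -/
theorem stmt_0 (f e v : ℕ) (vk : ℕ →₀ ℕ)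
    (hsupp : ∀ k, vk k ≠ 0 → 3 ≤ k)
    (hv : v = vk.sum fun _ n => n)
    (heuler : v + f = e + 2)
    (hface : 2 * e = 5 * f)
    (hvert : (vk.sum fun k n => k * n) = 2 * e) :
    Even f ∧ 12 ≤ f ∧ v = 2 + 3 * f / 2 ∧
      (vk.sum fun k n => (k - 3) * n) = f / 2 - 6 ∧
      f + 8 ≤ vk 3 := by
  classical
  -- termwise facts
  have hsupp' : ∀ k ∈ vk.support, 3 ≤ k := by
    intro k hk
    exact hsupp k (Finsupp.mem_support_iff.mp hk)
  have h3v : 3 * (vk.sum fun _ n => n) ≤ vk.sum fun k n => k * n := by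
    rw [Finsupp.sum, Finsupp.sum, Finset.mul_sum]
    refine Finset.sum_le_sum ?_
    intro k hk
    exact Nat.mul_le_mul_right _ (hsupp' k hk)
  -- Σ (k-3) n = Σ k n - 3 Σ n, via addition form
  have hsplit : (vk.sum fun k n => (k - 3) * n) + 3 * (vk.sum fun _ n => n)
      = vk.sum fun k n => k * n := by
    rw [Finsupp.sum, Finsupp.sum, Finsupp.sum, Finset.mul_sum, ← Finset.sum_add_distrib]
    refine Finset.sum_congr rfl ?_
    intro k hk
    have h3 := hsupp' k hk
    have : (k - 3) * vk k + 3 * vk k = ((k - 3) + 3) * vk k := by ring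
    rw [this, Nat.sub_add_cancel h3]
  -- vk 3 bound: Σ n ≤ vk 3 + Σ (k-3) n
  have hvk3 : (vk.sum fun _ n => n) ≤ vk 3 + vk.sum fun k n => (k - 3) * n := by
    rw [Finsupp.sum, Finsupp.sum]
    by_cases h3mem : 3 ∈ vk.support
    · rw [← Finset.sum_erase_add _ _ h3mem, ← Finset.sum_erase_add _ _ h3mem]
      have : ∑ k ∈ vk.support.erase 3, vk k ≤ ∑ k ∈ vk.support.erase 3, (k - 3) * vk k := by
        refine Finset.sum_le_sum ?_
        intro k hk
        have hne := Finset.ne_of_mem_erase hk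
        have h3 := hsupp' k (Finset.mem_of_mem_erase hk)
        have : 1 ≤ k - 3 := by omega
        calc vk k = 1 * vk k := (one_mul _).symm
          _ ≤ (k - 3) * vk k := Nat.mul_le_mul_right _ this
      omega
    · have h0 : vk 3 = 0 := Finsupp.notMem_support_iff.mp h3mem
      have : ∑ k ∈ vk.support, vk k ≤ ∑ k ∈ vk.support, (k - 3) * vk k := by
        refine Finset.sum_le_sum ?_
        intro k hk
        have h3 := hsupp' k hk
        have hne : k ≠ 3 := by rintro rfl; exact h3mem hk
        have : 1 ≤ k - 3 := by omega
        calc vk k = 1 * vk k := (one_mul _).symm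
          _ ≤ (k - 3) * vk k := Nat.mul_le_mul_right _ this
      omega
  rw [← hv] at h3v hsplit hvk3
  rw [hvert] at h3v hsplit
  have hEven : Even f := by
    rcases Nat.even_or_odd f with h | h
    · exact h
    · exfalso; rcases h with ⟨m, hm⟩; omega
  refine ⟨hEven, by omega, by omega, by omega, by omega⟩
end

section
/- Under these hypotheses, f ≥ 24. -/
/-- If additionally every face is incident to at most `4` degree-3 vertices (no `3⁵`-tile),
so that the incidence count `3·v₃` is at most `4f`, then `f ≥ 24`. -/
theorem stmt_1 (f e v : ℕ) (vk : ℕ →₀ ℕ)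
    (hsupp : ∀ k, vk k ≠ 0 → 3 ≤ k)
    (hv : v = vk.sum fun _ n => n)
    (heuler : v + f = e + 2)
    (hface : 2 * e = 5 * f)
    (hvert : (vk.sum fun k n => k * n) = 2 * e)
    (hincidence : 3 * vk 3 ≤ 4 * f) :
    24 ≤ f := by
  set A := vk.sum fun k n => (k - 3) * n with hA
  have h1 : (vk.sum fun k n => k * n) = 3 * v + A := by
    rw [hv, hA, Finsupp.sum, Finsupp.sum, Finsupp.sum, Finset.mul_sum,
      ← Finset.sum_add_distrib]
    refine Finset.sum_congr rfl fun k hk => ?_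
    have h3 : 3 ≤ k := hsupp k (Finsupp.mem_support_iff.mp hk)
    obtain ⟨m, rfl⟩ := Nat.exists_eq_add_of_le h3
    simp only [Nat.add_sub_cancel_left]
    ring
  have h2 : v ≤ A + vk 3 := by
    rw [hv, hA, Finsupp.sum, Finsupp.sum]
    calc (∑ k ∈ vk.support, vk k)
        ≤ ∑ k ∈ vk.support, ((k - 3) * vk k + if k = 3 then vk 3 else 0) := by
          refine Finset.sum_le_sum fun k hk => ?_
          have h3 : 3 ≤ k := hsupp k (Finsupp.mem_support_iff.mp hk)
          rcases eq_or_ne k 3 with rfl | hne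
          · simp
          · have : 1 ≤ k - 3 := by omega
            simp only [if_neg hne, add_zero]
            calc vk k = 1 * vk k := (one_mul _).symm
              _ ≤ (k - 3) * vk k := Nat.mul_le_mul_right _ this
      _ = (∑ k ∈ vk.support, (k - 3) * vk k) +
            ∑ k ∈ vk.support, (if k = 3 then vk 3 else 0) :=
          Finset.sum_add_distrib
      _ ≤ (∑ k ∈ vk.support, (k - 3) * vk k) + vk 3 := by
          gcongr
          rw [Finset.sum_ite_eq' vk.support 3 fun _ => vk 3]
          split <;> simp
  omega
end

section
/- For every vertex x in V, k(x) = l(x). (This is the 'balance lemma': if β can appear at most once at each vertex, then β and γ appear equally often at every vertex.) -/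
/-- Balance lemma: if `β` appears at most once at each vertex, the number of `β`'s
and `γ`'s at each vertex has even sum, and the totals agree, then `β` and `γ`
appear equally often at every vertex. -/
theorem stmt_2 {V : Type*} [Fintype V] (k l : V → ℕ)
    (h1 : ∀ x, k x ≤ 1)
    (h2 : ∀ x, Even (k x + l x))
    (h3 : ∑ x, k x = ∑ x, l x) :
    ∀ x, k x = l x := by
  have hle : ∀ x, k x ≤ l x := by
    intro x
    have := h1 x
    have := h2 x
    rcases this with ⟨m, hm⟩
    omega
  intro x
  exact ((Finset.sum_eq_sum_iff_of_le (fun i _ => hle i)).mp h3) x (Finset.mem_univ x)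
end

section
/- Then cos β = (√3 − 1)/√(2(4 − √3)), and π/4 < β < π/2; in particular β ≠ π/4. -/
open Real

theorem stmt_10 (b β : ℝ) (hb : 0 < b) (hb' : b < π / 2)
    (hcb : cos b = (3 + Real.sqrt 3) / 6)
    (hsb : sin b = Real.sqrt ((4 - Real.sqrt 3) / 6))
    (hβ : 0 < β) (hβ' : β < π)
    (h : cos b = cos (π / 6) * cos b + sin (π / 6) * sin b * cos β) :
    cos β = (Real.sqrt 3 - 1) / Real.sqrt (2 * (4 - Real.sqrt 3)) ∧
      π / 4 < β ∧ β < π / 2 := by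
  have h3 : (0:ℝ) ≤ 3 := by norm_num
  have hs3 : Real.sqrt 3 ^ 2 = 3 := Real.sq_sqrt h3
  have hs3pos : (0:ℝ) < Real.sqrt 3 := Real.sqrt_pos.mpr (by norm_num)
  have hs3lt : Real.sqrt 3 < 2 := by nlinarith [hs3, hs3pos]
  have hs3gt : 1 < Real.sqrt 3 := by nlinarith [hs3, hs3pos]
  set s3 := Real.sqrt 3 with hs3def
  have hspos : (0:ℝ) < (4 - s3) / 6 := by nlinarith
  have hsin : sin b ^ 2 = (4 - s3) / 6 := by
    rw [hsb]; exact Real.sq_sqrt hspos.le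
  have hsinpos : (0:ℝ) < sin b := by
    rw [hsb]; exact Real.sqrt_pos.mpr hspos
  set s := sin b with hsdef
  -- the value of sqrt (2*(4-s3))
  have ht : Real.sqrt (2 * (4 - s3)) = 2 * s3 * s := by
    rw [show (2 : ℝ) * (4 - s3) = (2 * s3 * s)^2 by nlinarith [hsin, hs3]]
    exact Real.sqrt_sq (by positivity)
  -- from h, compute cos β
  rw [Real.cos_pi_div_six, Real.sin_pi_div_six, hcb] at h
  have hcos : cos β = (s3 - 1) / Real.sqrt (2 * (4 - s3)) := by
    rw [ht]
    have hne : s ≠ 0 := ne_of_gt hsinpos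
    field_simp at h ⊢
    nlinarith [hsin, hs3, h, sq_nonneg s]
  refine ⟨hcos, ?_, ?_⟩
  · -- π/4 < β since cos β < √2/2
    by_contra hle
    push_neg at hle
    have hc : cos (π/4) ≤ cos β :=
      Real.cos_le_cos_of_nonneg_of_le_pi hβ.le (by linarith [Real.pi_pos]) hle
    rw [Real.cos_pi_div_four] at hc
    have hr2 : Real.sqrt 2 ^ 2 = 2 := Real.sq_sqrt (by norm_num)
    have hr2pos : (0:ℝ) < Real.sqrt 2 := Real.sqrt_pos.mpr (by norm_num)
    have hlt : cos β < Real.sqrt 2 / 2 := by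
      rw [hcos, ht, div_lt_div_iff₀ (by positivity) (by norm_num)]
      have e : (Real.sqrt 2 * (2 * s3 * s))^2 = (Real.sqrt 2 ^ 2) * (4 * s3 ^ 2 * s ^ 2) := by
        ring
      rw [hr2, hs3, hsin] at e
      have := lt_of_pow_lt_pow_left₀ 2 (show (0:ℝ) ≤ Real.sqrt 2 * (2 * s3 * s) by positivity)
        (show ((s3-1)*2)^2 < (Real.sqrt 2 * (2 * s3 * s))^2 by rw [e]; nlinarith [hs3])
      linarith
    linarith
  · -- β < π/2 since cos β > 0
    by_contra hle
    push_neg at hle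
    have hc : cos β ≤ 0 := Real.cos_nonpos_of_pi_div_two_le_of_le hle (by linarith [Real.pi_pos])
    have : (0:ℝ) < cos β := by
      rw [hcos, ht]; exact div_pos (by linarith) (by positivity)
    linarith
end

section
/- Then x satisfies the equation (1 − c)²·x³ + s·x² + (2c − c²)·x − s = 1/√5, and 0 < x < 1. (Thus x = cos a is the edge length parameter of the pentagonal subdivision of the icosahedron with δ = 6π/5.) -/
theorem stmt_11 (c s x : ℝ)
    (hc : c = -(1 + Real.sqrt 5) / 4)
    (hs : s = 1 - c ^ 2)
    (hx : x = (3 - Real.sqrt 5 + Real.sqrt (2 * (3 * Real.sqrt 5 - 1))) / (2 * Real.sqrt 5)) :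
    (1 - c) ^ 2 * x ^ 3 + s * x ^ 2 + (2 * c - c ^ 2) * x - s = 1 / Real.sqrt 5 ∧
      0 < x ∧ x < 1 := by
  set r := Real.sqrt 5 with hrdef
  set t := Real.sqrt (2 * (3 * Real.sqrt 5 - 1)) with htdef
  have hr5 : r ^ 2 = 5 := Real.sq_sqrt (by norm_num)
  have hrnn : 0 ≤ r := Real.sqrt_nonneg 5
  have hr2 : 2 ≤ r := by nlinarith
  have hr2' : r ≤ 9/4 := by nlinarith
  have hrpos : 0 < r := by linarith
  have hr0 : r ≠ 0 := ne_of_gt hrpos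
  have htnn : 0 ≤ t := Real.sqrt_nonneg _
  have ht : t ^ 2 = 6 * r - 2 := by
    rw [htdef, Real.sq_sqrt (by nlinarith)]
    ring
  have h2 : 2 * r * x = 3 - r + t := by
    rw [hx]; field_simp
  have hq : 20 * x ^ 2 = (12 * r - 20) * x + (12 * r - 16) := by
    linear_combination (2*r*x + r - 3 + t) * h2 - (4*x^2 + 4*x + 1) * hr5 + ht
  refine ⟨?_, ?_, ?_⟩
  · subst hc hs
    rw [eq_div_iff hr0]
    linear_combination (r*((15+5*r)*x+5+3*r)/160) * hq
      + (r*(60*x^2+96*x+36)/160 + 1/5 + r*(x^3 - x^2 - x + 1)/16) * hr5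
  · have : 0 < 3 - r + t := by linarith
    rw [hx]; positivity
  · -- x < 1 iff 3 - r + t < 2 r iff t < 3r - 3
    have ht3 : t < 3 * r - 3 := by nlinarith
    have : 2 * r * x < 2 * r * 1 := by rw [h2]; linarith
    exact lt_of_mul_lt_mul_left this (by positivity)
end

section
/- The cubic polynomial p(x) = x³ + (5 − 2√5)x² + (13 − 6√5)x + 1 − (4/5)√5 has exactly one root in the open interval (0, 1). -/
theorem stmt_12 :
    ∃! x : ℝ, x ∈ Set.Ioo (0 : ℝ) 1 ∧
      x ^ 3 + (5 - 2 * Real.sqrt 5) * x ^ 2 + (13 - 6 * Real.sqrt 5) * x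
        + 1 - (4 / 5) * Real.sqrt 5 = 0 := by
  set s := Real.sqrt 5 with hs_def
  have hs2 : s ^ 2 = 5 := Real.sq_sqrt (by norm_num)
  have hs0 : 0 < s := Real.sqrt_pos.mpr (by norm_num)
  have hsl : (2.2 : ℝ) < s := by nlinarith
  have hsu : s < 2.25 := by nlinarith
  set f : ℝ → ℝ := fun x => x ^ 3 + (5 - 2 * s) * x ^ 2 + (13 - 6 * s) * x
      + 1 - (4 / 5) * s with hf_def
  have hcont : ContinuousOn f (Set.Icc 0 1) := by
    apply Continuous.continuousOn; fun_prop
  have hf0 : f 0 < 0 := by simp only [hf_def]; nlinarith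
  have hf1 : 0 < f 1 := by simp only [hf_def]; nlinarith
  have hmem : (0 : ℝ) ∈ Set.Ioo (f 0) (f 1) := ⟨hf0, hf1⟩
  obtain ⟨x, hxI, hfx⟩ := intermediate_value_Ioo (by norm_num : (0:ℝ) ≤ 1) hcont hmem
  refine ⟨x, ⟨hxI, hfx⟩, ?_⟩
  rintro y ⟨hyI, hfy⟩
  by_contra hne
  obtain ⟨hx0, hx1⟩ := hxI
  obtain ⟨hy0, hy1⟩ := hyI
  simp only [hf_def] at hfx hfy
  have hS : (y - x) * (y ^ 2 + y * x + x ^ 2 + (5 - 2 * s) * (y + x) + (13 - 6 * s)) = 0 := by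
    linear_combination hfy - hfx
  have hne' : y - x ≠ 0 := sub_ne_zero.mpr hne
  have hS0 : y ^ 2 + y * x + x ^ 2 + (5 - 2 * s) * (y + x) + (13 - 6 * s) = 0 :=
    (mul_eq_zero.mp hS).resolve_left hne'
  have hxq : x * (x ^ 2 + (5 - 2 * s) * x + (13 - 6 * s)) = (4 / 5) * s - 1 := by
    linear_combination hfx
  have hyq : y * (y ^ 2 + (5 - 2 * s) * y + (13 - 6 * s)) = (4 / 5) * s - 1 := by
    linear_combination hfy
  have hrhs : (0 : ℝ) < (4 / 5) * s - 1 := by nlinarith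
  have hA : 0 < x ^ 2 + (5 - 2 * s) * x + (13 - 6 * s) := by
    by_contra h
    push_neg at h
    nlinarith [mul_nonpos_of_nonneg_of_nonpos (le_of_lt hx0) h]
  have hB : 0 < y ^ 2 + (5 - 2 * s) * y + (13 - 6 * s) := by
    by_contra h
    push_neg at h
    nlinarith [mul_nonpos_of_nonneg_of_nonpos (le_of_lt hy0) h]
  nlinarith [mul_pos hx0 hy0, hS0, hA, hB, hsl]
end

section
/- The cubic polynomial q(x) = x³ + (3 − 2√2)x² + (5 − 4√2)x − 3 + 2√2 has exactly one root in the open interval (0, 1). -/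
theorem stmt_13 :
    ∃! x : ℝ, x ∈ Set.Ioo (0 : ℝ) 1 ∧
      x ^ 3 + (3 - 2 * Real.sqrt 2) * x ^ 2 + (5 - 4 * Real.sqrt 2) * x
        - 3 + 2 * Real.sqrt 2 = 0 := by
  set s := Real.sqrt 2 with hsdef
  have hs2 : s ^ 2 = 2 := Real.sq_sqrt (by norm_num)
  have hs0 : 0 ≤ s := Real.sqrt_nonneg 2
  have hs1 : 1 < s := by nlinarith
  have hs15 : s < 3/2 := by nlinarith
  set q : ℝ → ℝ := fun x => x ^ 3 + (3 - 2 * s) * x ^ 2 + (5 - 4 * s) * x - 3 + 2 * s with hq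
  -- q is negative on (0, s-1]
  have hneg : ∀ x : ℝ, 0 < x → x ≤ s - 1 → q x < 0 := by
    intro x hx hx'
    simp only [hq]
    nlinarith [sq_nonneg x, sq_nonneg (x - (s-1)), mul_pos hx hx, sq_nonneg (x*(s-1))]
  -- existence via IVT
  have hcont : ContinuousOn q (Set.Icc (0:ℝ) 1) := by
    apply Continuous.continuousOn; simp only [hq]; continuity
  have hiv := intermediate_value_Ioo (by norm_num : (0:ℝ) ≤ 1) hcont
  have h0 : q 0 = -3 + 2 * s := by norm_num [hq]
  have h1 : q 1 = 6 - 4 * s := by simp only [hq]; ring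
  have hmem : (0:ℝ) ∈ Set.Ioo (q 0) (q 1) := by
    rw [h0, h1]; constructor <;> nlinarith
  obtain ⟨x, hx, hqx⟩ := hiv hmem
  refine ⟨x, ⟨hx, hqx⟩, ?_⟩
  rintro y ⟨hy, hqy⟩
  -- both roots are > s - 1
  have key : ∀ a b : ℝ, a ∈ Set.Ioo (0:ℝ) 1 → b ∈ Set.Ioo (0:ℝ) 1 → q a = 0 → q b = 0 → a < b → False := by
    intro a b ⟨ha0, ha1⟩ ⟨hb0, hb1⟩ hqa hqb hab
    have hag : s - 1 < a := by
      by_contra h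
      exact absurd hqa (ne_of_lt (hneg a ha0 (not_lt.mp h)))
    simp only [hq] at hqa hqb
    have hP : a ^ 2 + a * b + b ^ 2 + (3 - 2*s) * (a + b) + (5 - 4*s) > 0 := by
      nlinarith [mul_pos (sub_pos.mpr hag) (sub_pos.mpr (lt_trans hag hab)), sq_nonneg (a - b)]
    have : (b - a) * (a ^ 2 + a * b + b ^ 2 + (3 - 2*s) * (a + b) + (5 - 4*s)) = 0 := by
      nlinarith [hqa, hqb]
    have := mul_pos (sub_pos.mpr hab) hP
    linarith
  rcases lt_trichotomy x y with h | h | h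
  · exact absurd (key x y hx hy hqx hqy h) not_false
  · exact h.symm
  · exact absurd (key y x hy hx hqy hqx h) not_false
end
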